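/- Let D be a diagonal n×n matrix with d_i = 0 for i ≤ K and d_i > 0 for i > K, and let s ∈ ℝⁿ with ‖s‖ = 1 and Σ_{i=1}^K s_i² > 0. Then there exists ε > 0 such that for all z with ‖z‖ ≤ ε, ‖Dz‖² − (⟨s,Dz⟩ + ⟨z,Dz⟩)² ≥ (1/2)·d_{K+1}·(Σ_{i=1}^K s_i²)·⟨z,Dz⟩. -/
import Mathlib


open Matrix Finset


set_option maxHeartbeats 1000000

private lemma diag_H_aux (e a b A : ℝ) (he : 0 < e)
    (haA : a ^ 2 ≤ A) (hb : b ^ 2 ≤ e ^ 2 * A) : 2 * a * b ≤ 2 * e * A := by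
  nlinarith [sq_nonneg (e * a - b), mul_le_mul_of_nonneg_left haA (sq_nonneg e), he.le,
    mul_pos he he]

/-- For a diagonal matrix `D = Diag(d)` with `dᵢ = 0` for `i < K` and
`0 < d_{K+1} ≤ … ≤ d_n`, and a unit vector `s` not orthogonal to `Null(D)`
(`Σ_{i<K} sᵢ² > 0`), there is `ε > 0` such that for all `z` with `‖z‖ ≤ ε`,
`‖Dz‖² − (α + β)² ≥ (1/2)·d_{K+1}·(Σ_{i<K} sᵢ²)·β`, where `α = ⟨s, Dz⟩`, `β = ⟨z, Dz⟩`. -/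
theorem diag_H_lower_bound
    (n K : ℕ) (hK : K < n) (d : Fin n → ℝ) (s : EuclideanSpace ℝ (Fin n))
    (hd0 : ∀ i : Fin n, (i : ℕ) < K → d i = 0)
    (hdpos : ∀ i : Fin n, K ≤ (i : ℕ) → 0 < d i)
    (hmono : ∀ i j : Fin n, i ≤ j → d i ≤ d j)
    (hs : ‖s‖ = 1)
    (hsK : 0 < ∑ i ∈ univ.filter (fun i : Fin n => (i : ℕ) < K), (s i) ^ 2) :
    ∃ ε > 0, ∀ z : EuclideanSpace ℝ (Fin n), ‖z‖ ≤ ε →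
      (1 / 2) * d ⟨K, hK⟩
          * (∑ i ∈ univ.filter (fun i : Fin n => (i : ℕ) < K), (s i) ^ 2)
          * (∑ i, d i * (z i) ^ 2)
        ≤ (∑ i, (d i * z i) ^ 2)
          - ((∑ i, s i * (d i * z i)) + (∑ i, d i * (z i) ^ 2)) ^ 2 := by
  classical
  set σ : ℝ := ∑ i ∈ univ.filter (fun i : Fin n => (i : ℕ) < K), (s i) ^ 2 with hσdef
  set t : ℝ := d ⟨K, hK⟩ with htdef
  have ht : 0 < t := hdpos _ le_rfl
  have hsum_s : (∑ i, (s i) ^ 2) = 1 := by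
    have h1 : ‖s‖ = Real.sqrt (∑ i, ‖s i‖ ^ 2) := EuclideanSpace.norm_eq s
    have h2 : (∑ i, ‖s i‖ ^ 2) = ∑ i, (s i) ^ 2 := by
      refine Finset.sum_congr rfl fun i _ => ?_
      rw [Real.norm_eq_abs, sq_abs]
    have h3 : Real.sqrt (∑ i, (s i) ^ 2) = 1 := by rw [← h2, ← h1, hs]
    have h4 : 0 ≤ ∑ i, (s i) ^ 2 := Finset.sum_nonneg fun i _ => sq_nonneg _
    nlinarith [Real.sq_sqrt h4]
  have hσ1 : σ ≤ 1 := by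
    rw [← hsum_s]
    exact Finset.sum_le_sum_of_subset_of_nonneg (Finset.filter_subset _ _)
      (fun i _ _ => sq_nonneg _)
  have hdnn : ∀ i, 0 ≤ d i := fun i => by
    rcases lt_or_ge (i : ℕ) K with h | h
    · simp [hd0 i h]
    · exact (hdpos i h).le
  refine ⟨σ / 8, by positivity, fun z hz => ?_⟩
  set A : ℝ := ∑ i, (d i * z i) ^ 2 with hAdef
  set β : ℝ := ∑ i, d i * (z i) ^ 2 with hβdef
  set α : ℝ := ∑ i, s i * (d i * z i) with hαdef
  set Z : ℝ := ∑ i, (z i) ^ 2 with hZdef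
  have hβ0 : 0 ≤ β := Finset.sum_nonneg fun i _ => mul_nonneg (hdnn i) (sq_nonneg _)
  have hA0 : 0 ≤ A := Finset.sum_nonneg fun i _ => sq_nonneg _
  have hZ0 : 0 ≤ Z := Finset.sum_nonneg fun i _ => sq_nonneg _
  -- Z ≤ (σ/8)^2
  have hZε : Z ≤ (σ / 8) ^ 2 := by
    have h1 : ‖z‖ = Real.sqrt Z := by
      rw [EuclideanSpace.norm_eq]
      congr 1
      exact Finset.sum_congr rfl fun i _ => by rw [Real.norm_eq_abs, sq_abs]
    have h2 : Real.sqrt Z ≤ σ / 8 := by rw [← h1]; exact hz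
    nlinarith [Real.sq_sqrt hZ0, Real.sqrt_nonneg Z]
  -- t * β ≤ A
  have hAβ : t * β ≤ A := by
    rw [Finset.mul_sum]
    apply Finset.sum_le_sum
    intro i _
    rcases lt_or_ge (i : ℕ) K with h | h
    · simp [hd0 i h]
    · have hdi : t ≤ d i := hmono _ _ (by simpa [Fin.le_def] using h)
      nlinarith [sq_nonneg (z i), hdnn i]
  -- α² ≤ (1 - σ) * A
  have hα2 : α ^ 2 ≤ (1 - σ) * A := by
    set S : Finset (Fin n) := univ.filter (fun i : Fin n => ¬ (i : ℕ) < K) with hSdef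
    have hαS : α = ∑ i ∈ S, s i * (d i * z i) := by
      rw [hαdef]
      refine (Finset.sum_subset (Finset.filter_subset _ _) ?_).symm
      intro i _ hi
      have : (i : ℕ) < K := by simpa [hSdef] using hi
      simp [hd0 i this]
    have hcs := Finset.sum_mul_sq_le_sq_mul_sq S (fun i => s i) (fun i => d i * z i)
    have hS1 : (∑ i ∈ S, (s i) ^ 2) = 1 - σ := by
      have := Finset.sum_filter_add_sum_filter_not univ
        (fun i : Fin n => (i : ℕ) < K) (fun i => (s i) ^ 2)
      rw [hsum_s] at this
      rw [hSdef]
      linarith [this]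
    have hSA : (∑ i ∈ S, (d i * z i) ^ 2) ≤ A := by
      exact Finset.sum_le_sum_of_subset_of_nonneg (Finset.filter_subset _ _)
        (fun i _ _ => sq_nonneg _)
    rw [hαS]
    calc (∑ i ∈ S, s i * (d i * z i)) ^ 2
        ≤ (∑ i ∈ S, (s i) ^ 2) * ∑ i ∈ S, (d i * z i) ^ 2 := hcs
      _ ≤ (1 - σ) * A := by
          rw [hS1]
          exact mul_le_mul_of_nonneg_left hSA (by linarith)
  -- β² ≤ A * Z
  have hβ2 : β ^ 2 ≤ A * Z := by
    have hβeq : β = ∑ i, (d i * z i) * z i := by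
      rw [hβdef]; exact Finset.sum_congr rfl fun i _ => by ring
    rw [hβeq]
    exact Finset.sum_mul_sq_le_sq_mul_sq univ (fun i => d i * z i) (fun i => z i)
  -- combine
  have hσ0 : 0 < σ := hsK
  have hε : (0:ℝ) < σ / 8 := by positivity
  have hαA : α ^ 2 ≤ A := by nlinarith
  have hβ2' : β ^ 2 ≤ (σ / 8) ^ 2 * A := by nlinarith
  have h2ab : 2 * α * β ≤ 2 * (σ / 8) * A := diag_H_aux _ _ _ _ hε hαA hβ2'
  have hfinal : (α + β) ^ 2 ≤ (1 - σ) * A + 2 * (σ / 8) * A + (σ / 8) ^ 2 * A := by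
    have : (α + β) ^ 2 = α ^ 2 + 2 * α * β + β ^ 2 := by ring
    linarith
  have h3 : (σ / 2) * (t * β) ≤ (σ / 2) * A :=
    mul_le_mul_of_nonneg_left hAβ (by linarith)
  have h4 : 0 ≤ A * (σ / 4 - σ ^ 2 / 64) :=
    mul_nonneg hA0 (by nlinarith)
  have h5 : A - ((1 - σ) * A + 2 * (σ / 8) * A + (σ / 8) ^ 2 * A)
      = (σ / 2) * A + A * (σ / 4 - σ ^ 2 / 64) := by ring
  have h6 : (1 / 2) * t * σ * β = (σ / 2) * (t * β) := by ring
  linarith
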